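/- The approximated potential lies below the original potential: for every λ > 0 and every r ∈ ℝ, Ψ_λ(r) ≤ Ψ(r). -/

import Mathlib

/-- The approximated potential lies below the original one: `Ψ_λ(r) ≤ Ψ(r)`
for all `λ > 0` and `r ∈ ℝ`. -/
theorem approx_potential_le
    (Ψ : ℝ → ℝ) (C : ℝ) (hC : 0 < C)
    (hΨ : ContDiff ℝ 2 Ψ) (hΨ'0 : deriv Ψ 0 = 0)
    (hΨ'' : ∀ x : ℝ, -C ≤ deriv (deriv Ψ) x)
    (J : ℝ → ℝ → ℝ)
    (hJ : ∀ l : ℝ, 0 < l → ∀ r : ℝ,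
      J l r + l * (deriv Ψ (J l r) + C * J l r) = r)
    (l : ℝ) (hl : 0 < l) (r : ℝ) :
    Ψ 0 - C / 2 * r ^ 2 + (∫ s in (0:ℝ)..r, (s - J l s) / l) ≤ Ψ r := by
  set γ : ℝ → ℝ := fun x => deriv Ψ x + C * x with hγdef
  have hΨ1 : ContDiff ℝ 1 (deriv Ψ) := by
    have := (contDiff_succ_iff_deriv (n := 1)).mp (by exact_mod_cast hΨ)
    exact this.2.2
  have hΨ'diff : Differentiable ℝ (deriv Ψ) := hΨ1.differentiable one_ne_zero
  have hΨ'cont : Continuous (deriv Ψ) := hΨ'diff.continuous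
  have hγcont : Continuous γ := by
    rw [hγdef]; exact hΨ'cont.add (continuous_const.mul continuous_id')
  have hγdiff : Differentiable ℝ γ := by
    rw [hγdef]; exact hΨ'diff.add (by fun_prop)
  have hγmono : Monotone γ := by
    apply monotone_of_deriv_nonneg hγdiff
    intro x
    have hd : deriv γ x = deriv (deriv Ψ) x + C := by
      have h : HasDerivAt γ (deriv (deriv Ψ) x + C) x := by
        have := ((hΨ'diff x).hasDerivAt.add (((hasDerivAt_id x).const_mul C)))
        rw [show deriv (deriv Ψ) x + C = deriv (deriv Ψ) x + C * 1 by ring]; exact this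
      exact h.deriv
    rw [hd]; linarith [hΨ'' x]
  have hγ0 : γ 0 = 0 := by simp [hγdef, hΨ'0]
  have hJeq : ∀ s : ℝ, J l s + l * γ (J l s) = s := fun s => hJ l hl s
  have hJγ : ∀ s : ℝ, (s - J l s) / l = γ (J l s) := by
    intro s
    have := hJeq s
    field_simp
    linarith
  have hJmono : Monotone (J l) := by
    intro a b hab
    by_contra h
    push_neg at h
    have h1 := hγmono h.le
    have ha := hJeq a
    have hb := hJeq b
    nlinarith
  have hfmono : Monotone (fun s => γ (J l s)) := hγmono.comp hJmono
  have hpos : ∀ s : ℝ, 0 ≤ s → γ (J l s) ≤ γ s := by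
    intro s hs
    have heq := hJeq s
    have hJ0 : 0 ≤ J l s := by
      by_contra h
      push_neg at h
      have hγJ : γ (J l s) ≤ 0 := hγ0 ▸ hγmono h.le
      nlinarith
    have hγJ0 : 0 ≤ γ (J l s) := hγ0 ▸ hγmono hJ0
    have hJle : J l s ≤ s := by nlinarith
    exact hγmono hJle
  have hneg : ∀ s : ℝ, s ≤ 0 → γ s ≤ γ (J l s) := by
    intro s hs
    have heq := hJeq s
    have hJ0 : J l s ≤ 0 := by
      by_contra h
      push_neg at h
      have hγJ : 0 ≤ γ (J l s) := hγ0 ▸ hγmono h.le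
      nlinarith
    have hγJ0 : γ (J l s) ≤ 0 := hγ0 ▸ hγmono hJ0
    have hJge : s ≤ J l s := by nlinarith
    exact hγmono hJge
  have hint_rw : (∫ s in (0:ℝ)..r, (s - J l s) / l) = ∫ s in (0:ℝ)..r, γ (J l s) :=
    intervalIntegral.integral_congr fun s _ => hJγ s
  rw [hint_rw]
  have hftc : (∫ s in (0:ℝ)..r, deriv Ψ s) = Ψ r - Ψ 0 := by
    apply intervalIntegral.integral_deriv_eq_sub
    · intro x _; exact (hΨ.differentiable (by norm_num)) x
    · exact hΨ'cont.intervalIntegrable 0 r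
  have hγint : (∫ s in (0:ℝ)..r, γ s) = Ψ r - Ψ 0 + C * r ^ 2 / 2 := by
    have h1 : (∫ s in (0:ℝ)..r, γ s)
        = (∫ s in (0:ℝ)..r, deriv Ψ s) + ∫ s in (0:ℝ)..r, C * s := by
      rw [← intervalIntegral.integral_add (hΨ'cont.intervalIntegrable 0 r)
        ((by continuity : Continuous fun s : ℝ => C * s).intervalIntegrable 0 r)]
    have h2 : (∫ s in (0:ℝ)..r, C * s) = C * r ^ 2 / 2 := by
      rw [intervalIntegral.integral_const_mul, integral_id]
      ring
    rw [h1, hftc, h2]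
  have hintf : IntervalIntegrable (fun s => γ (J l s)) MeasureTheory.volume 0 r :=
    hfmono.intervalIntegrable
  have hintγ : IntervalIntegrable γ MeasureTheory.volume 0 r :=
    hγcont.intervalIntegrable 0 r
  have key : (∫ s in (0:ℝ)..r, γ (J l s)) ≤ ∫ s in (0:ℝ)..r, γ s := by
    rcases le_total 0 r with hr | hr
    · exact intervalIntegral.integral_mono_on hr hintf hintγ fun s hs => hpos s hs.1
    · have h := intervalIntegral.integral_mono_on hr hintγ.symm hintf.symm
        fun s hs => hneg s hs.2
      have e1 : (∫ s in r..(0:ℝ), γ s) = -∫ s in (0:ℝ)..r, γ s :=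
        intervalIntegral.integral_symm 0 r
      have e2 : (∫ s in r..(0:ℝ), γ (J l s)) = -∫ s in (0:ℝ)..r, γ (J l s) :=
        intervalIntegral.integral_symm 0 r
      rw [e1, e2] at h
      linarith
  linarith [key, hγint]
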